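/- Swap lemma: Let v ∈ {a,b}^n, W = IBWT(v), and LCP = LCP_W. Suppose x is a string occurring in W such that (1) LCP[i_{xa}+1..j_{xa}) = LCP[i_{xb}+1..j_{xb}) as arrays, and (2) v[i_{xa}..j_{xa}) consists entirely of a's and v[i_{xb}..j_{xb}) consists entirely of b's, where [i_z..j_z) denotes the z-interval for z ∈ {xa, xb}. Let v' be obtained from v by setting v'[i_{xa}..j_{xa}) to all b's and v'[i_{xb}..j_{xb}) to all a's, leaving the rest unchanged. Then LCP_{IBWT(v')} = LCP. -/

import Mathlib

set_option linter.unusedSectionVars false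

set_option linter.unusedSectionVars false

namespace SILA

variable {α : Type*} [LinearOrder α]

def lexLE (f g : ℕ → α) : Prop :=
  f = g ∨ ∃ k, (∀ m < k, f m = g m) ∧ f k < g k

noncomputable def lcpInf (f g : ℕ → α) : ℕ∞ :=
  sSup {m : ℕ∞ | ∀ k : ℕ, (k : ℕ∞) < m → f k = g k}

def IsPrefix (x : List α) (f : ℕ → α) : Prop :=
  ∀ m : Fin x.length, f m.val = x.get m

/-- The standard permutation of `v`: the stable-sort permutation. -/
noncomputable def stdPerm {n : ℕ} (v : Fin n → α) : Equiv.Perm (Fin n) := Tuple.sort v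

/-- The cyclic suffix of `IBWT v` corresponding to rank `r` of the suffix array
(Lemma: `W_{SA[r]} = v̂[r]·v̂[Ψ r]·v̂[Ψ² r]⋯` with `v̂ = v ∘ Ψ`). -/
noncomputable def ibwtSuffix {n : ℕ} (v : Fin n → α) (r : Fin n) : ℕ → α :=
  fun k => v ((stdPerm v ^ (k + 1)) r)

/-- The LCP array of the cyclic suffix array of `IBWT v`. -/
noncomputable def ibwtLCP {n : ℕ} (v : Fin n → α) (r : ℕ) : ℕ∞ :=
  if h : 0 < r ∧ r < n then
    lcpInf (ibwtSuffix v ⟨r - 1, by omega⟩) (ibwtSuffix v ⟨r, h.2⟩)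
  else 0

/-- `[i..j)` is the x-interval of the cyclic suffix array of `IBWT v`. -/
def IsXIntervalIBWT {n : ℕ} (v : Fin n → α) (x : List α) (i j : ℕ) : Prop :=
  i ≤ j ∧ j ≤ n ∧ ∀ r : Fin n, IsPrefix x (ibwtSuffix v r) ↔ (i ≤ r.val ∧ r.val < j)


set_option maxHeartbeats 1600000

lemma le_lcpInf {f g : ℕ → α} {m : ℕ∞} (h : ∀ k : ℕ, (k : ℕ∞) < m → f k = g k) :
    m ≤ lcpInf f g := le_sSup h

lemma apply_eq_of_lt_lcpInf {f g : ℕ → α} {k : ℕ} (h : (k : ℕ∞) < lcpInf f g) :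
    f k = g k := by
  obtain ⟨m, hm, hk⟩ := lt_sSup_iff.mp h
  exact hm k hk

lemma lcpInf_le {f g : ℕ → α} {k : ℕ} (h : f k ≠ g k) : lcpInf f g ≤ k := by
  refine sSup_le fun m hm => ?_
  by_contra hc
  push_neg at hc
  exact h (hm k hc)

lemma lcpInf_eq_top {f g : ℕ → α} (h : ∀ k, f k = g k) : lcpInf f g = ⊤ :=
  top_le_iff.mp (le_lcpInf fun k _ => h k)

lemma lcpInf_eq_zero {f g : ℕ → α} (h : f 0 ≠ g 0) : lcpInf f g = 0 :=
  le_antisymm (by simpa using lcpInf_le h) bot_le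

lemma one_add_natCast (m : ℕ) : (1 : ℕ∞) + (m : ℕ∞) = ((m + 1 : ℕ) : ℕ∞) := by
  push_cast; ring

lemma lcpInf_cons {f g : ℕ → α} (h : f 0 = g 0) :
    lcpInf f g = 1 + lcpInf (fun k => f (k + 1)) (fun k => g (k + 1)) := by
  set f' := fun k => f (k + 1) with hf'
  set g' := fun k => g (k + 1) with hg'
  refine le_antisymm ?_ ?_
  · rcases eq_or_ne (lcpInf f' g') ⊤ with ht | ht
    · simp [ht]
    · obtain ⟨m', hm'⟩ : ∃ m' : ℕ, lcpInf f' g' = (m' : ℕ∞) :=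
        ⟨(lcpInf f' g').toNat, (ENat.coe_toNat ht).symm⟩
      by_contra hc
      push_neg at hc
      rw [hm', one_add_natCast] at hc
      have h2 : ((m' + 1 : ℕ) : ℕ∞) ≤ lcpInf f' g' := by
        refine le_lcpInf fun k hk => ?_
        have hk' : k + 1 ≤ m' + 1 := by
          have : k < m' + 1 := by exact_mod_cast hk
          omega
        have hlt : ((k + 1 : ℕ) : ℕ∞) < lcpInf f g :=
          lt_of_le_of_lt (by exact_mod_cast hk') hc
        show f (k + 1) = g (k + 1)
        exact apply_eq_of_lt_lcpInf hlt
      rw [hm'] at h2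
      have : m' + 1 ≤ m' := by exact_mod_cast h2
      omega
  · rcases eq_or_ne (lcpInf f' g') ⊤ with ht | ht
    · have : ∀ k, f k = g k := by
        intro k
        cases k with
        | zero => exact h
        | succ j =>
          have : (j : ℕ∞) < lcpInf f' g' := by simp [ht]
          exact apply_eq_of_lt_lcpInf (f := f') (g := g') this
      simp [lcpInf_eq_top this]
    · obtain ⟨m', hm'⟩ : ∃ m' : ℕ, lcpInf f' g' = (m' : ℕ∞) :=
        ⟨(lcpInf f' g').toNat, (ENat.coe_toNat ht).symm⟩
      rw [hm', one_add_natCast]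
      refine le_lcpInf fun k hk => ?_
      have hk' : k < m' + 1 := by exact_mod_cast hk
      cases k with
      | zero => exact h
      | succ j =>
        have hj : (j : ℕ∞) < lcpInf f' g' := by
          rw [hm']; exact_mod_cast Nat.lt_of_succ_lt_succ hk'
        exact apply_eq_of_lt_lcpInf (f := f') (g := g') hj

section Suffix

variable {n : ℕ} (w : Fin n → α)

lemma ibwtSuffix_zero (r : Fin n) : ibwtSuffix w r 0 = w (stdPerm w r) := by
  simp [ibwtSuffix]

lemma ibwtSuffix_succ (r : Fin n) (k : ℕ) :
    ibwtSuffix w r (k + 1) = ibwtSuffix w (stdPerm w r) k := by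
  show w ((stdPerm w ^ (k + 1 + 1)) r) = w ((stdPerm w ^ (k + 1)) (stdPerm w r))
  rw [pow_succ, Equiv.Perm.mul_apply]

lemma hat_monotone : Monotone (fun r => w (stdPerm w r)) := Tuple.monotone_sort w

lemma stdPerm_strict {i j : Fin n} (hij : i < j) (h : w (stdPerm w i) = w (stdPerm w j)) :
    stdPerm w i < stdPerm w j :=
  ((Tuple.eq_sort_iff.mp (rfl : stdPerm w = Tuple.sort w)).2) i j hij h

lemma stdPerm_lt_iff {i j : Fin n} (h : w (stdPerm w i) = w (stdPerm w j)) :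
    stdPerm w i < stdPerm w j ↔ i < j := by
  constructor
  · intro hlt
    rcases lt_trichotomy i j with h1 | h1 | h1
    · exact h1
    · exact absurd hlt (by simp [h1])
    · exact absurd (stdPerm_strict w h1 h.symm) (asymm hlt)
  · exact fun hij => stdPerm_strict w hij h

/-- first characters of suffixes are monotone in rank -/
lemma suffix_first_mono {p q : Fin n} (h : p ≤ q) :
    ibwtSuffix w p 0 ≤ ibwtSuffix w q 0 := by
  rw [ibwtSuffix_zero, ibwtSuffix_zero]
  exact hat_monotone w h

/-- Sandwich: if `p ≤ t ≤ q` and the suffixes at `p` and `q` agree below `m`,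
then the suffix at `t` agrees with them below `m`. -/
lemma sandwich : ∀ (m : ℕ) (p t q : Fin n), p ≤ t → t ≤ q →
    (∀ i < m, ibwtSuffix w p i = ibwtSuffix w q i) →
    ∀ i < m, ibwtSuffix w t i = ibwtSuffix w p i := by
  intro m
  induction m with
  | zero => intro p t q _ _ _ i hi; omega
  | succ m ih =>
    intro p t q hpt htq hagree i hi
    have h0 : ibwtSuffix w p 0 = ibwtSuffix w q 0 := hagree 0 (Nat.succ_pos m)
    have ht0 : ibwtSuffix w t 0 = ibwtSuffix w p 0 := by
      have h1 := suffix_first_mono w hpt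
      have h2 := suffix_first_mono w htq
      exact le_antisymm (by rw [h0]; exact h2) h1
    -- move to Ψ images
    have hc : w (stdPerm w p) = w (stdPerm w t) := by
      have := ht0.symm
      rwa [ibwtSuffix_zero, ibwtSuffix_zero] at this
    have hc2 : w (stdPerm w t) = w (stdPerm w q) := by
      have : ibwtSuffix w t 0 = ibwtSuffix w q 0 := by rw [ht0, h0]
      rwa [ibwtSuffix_zero, ibwtSuffix_zero] at this
    have hpt' : stdPerm w p ≤ stdPerm w t := by
      rcases eq_or_lt_of_le hpt with he | hlt
      · rw [he]
      · exact le_of_lt (stdPerm_strict w hlt hc)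
    have htq' : stdPerm w t ≤ stdPerm w q := by
      rcases eq_or_lt_of_le htq with he | hlt
      · rw [he]
      · exact le_of_lt (stdPerm_strict w hlt hc2)
    have hagree' : ∀ i < m, ibwtSuffix w (stdPerm w p) i = ibwtSuffix w (stdPerm w q) i := by
      intro i hi'
      have := hagree (i + 1) (Nat.succ_lt_succ hi')
      rwa [ibwtSuffix_succ, ibwtSuffix_succ] at this
    cases i with
    | zero => exact ht0
    | succ j =>
      have hj : j < m := Nat.lt_of_succ_lt_succ hi
      rw [ibwtSuffix_succ, ibwtSuffix_succ]
      exact ih (stdPerm w p) (stdPerm w t) (stdPerm w q) hpt' htq' hagree' j hj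

/-- monotone at first disagreement -/
lemma suffix_mono_at : ∀ (j : ℕ) (p q : Fin n), p ≤ q →
    (∀ i < j, ibwtSuffix w p i = ibwtSuffix w q i) →
    ibwtSuffix w p j ≤ ibwtSuffix w q j := by
  intro j
  induction j with
  | zero => intro p q h _; exact suffix_first_mono w h
  | succ j ih =>
    intro p q hpq hagree
    have h0 : ibwtSuffix w p 0 = ibwtSuffix w q 0 := hagree 0 (Nat.succ_pos j)
    have hc : w (stdPerm w p) = w (stdPerm w q) := by
      have := h0
      rwa [ibwtSuffix_zero, ibwtSuffix_zero] at this
    have hpq' : stdPerm w p ≤ stdPerm w q := by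
      rcases eq_or_lt_of_le hpq with he | hlt
      · rw [he]
      · exact le_of_lt (stdPerm_strict w hlt hc)
    have hagree' : ∀ i < j, ibwtSuffix w (stdPerm w p) i = ibwtSuffix w (stdPerm w q) i := by
      intro i hi'
      have := hagree (i + 1) (Nat.succ_lt_succ hi')
      rwa [ibwtSuffix_succ, ibwtSuffix_succ] at this
    rw [ibwtSuffix_succ, ibwtSuffix_succ]
    exact ih _ _ hpq' hagree'

/-- adjacent agreement from LCP array -/
lemma adjacent_agree {t : ℕ} (h1 : 0 < t) (h2 : t < n) {k : ℕ}
    (hk : (k : ℕ∞) < ibwtLCP w t) :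
    ibwtSuffix w ⟨t - 1, by omega⟩ k = ibwtSuffix w ⟨t, h2⟩ k := by
  rw [ibwtLCP, dif_pos ⟨h1, h2⟩] at hk
  exact apply_eq_of_lt_lcpInf hk

lemma chain (k : ℕ) : ∀ (d : ℕ) (p q : Fin n), (q : ℕ) - (p : ℕ) = d → p ≤ q →
    (∀ t ∈ Finset.Ioc (p : ℕ) (q : ℕ), (k : ℕ∞) < ibwtLCP w t) →
    ibwtSuffix w p k = ibwtSuffix w q k := by
  intro d
  induction d with
  | zero =>
    intro p q hd hpq _
    have : p = q := Fin.le_antisymm hpq (by rw [Fin.le_def]; omega)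
    rw [this]
  | succ d ih =>
    intro p q hd hpq hlt
    have hq1 : 0 < (q : ℕ) := by omega
    have hq2 : (q : ℕ) < n := q.isLt
    set q' : Fin n := ⟨(q : ℕ) - 1, by omega⟩ with hq'
    have hstep : ibwtSuffix w q' k = ibwtSuffix w q k := by
      have := adjacent_agree w hq1 hq2 (hlt (q : ℕ) (by simp [Finset.mem_Ioc]; omega))
      convert this using 2
    have hpq' : p ≤ q' := by rw [Fin.le_def]; simp [hq']; omega
    have := ih p q' (by simp [hq']; omega) hpq'
      (fun t ht => hlt t (by simp only [Finset.mem_Ioc] at ht ⊢; have hq'v : (q' : ℕ) = (q : ℕ) - 1 := rfl; omega))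
    rw [this, hstep]

/-- Range-min property of the LCP array. -/
lemma range_min {p q : Fin n} (hpq : p < q) :
    lcpInf (ibwtSuffix w p) (ibwtSuffix w q) =
      (Finset.Ioc (p : ℕ) (q : ℕ)).inf (ibwtLCP w) := by
  refine le_antisymm ?_ ?_
  · refine Finset.le_inf fun t ht => ?_
    simp only [Finset.mem_Ioc] at ht
    have ht1 : 0 < t := by omega
    have ht2 : t < n := by have := q.isLt; omega
    rw [ibwtLCP, dif_pos ⟨ht1, ht2⟩]
    refine le_lcpInf fun k hk => ?_
    -- suffixes at t-1 and t both agree with p below k+1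
    have hagree : ∀ i < k + 1, ibwtSuffix w p i = ibwtSuffix w q i := by
      intro i hi
      exact apply_eq_of_lt_lcpInf (lt_of_le_of_lt (by exact_mod_cast Nat.lt_succ_iff.mp hi) hk)
    have h1 := sandwich w (k + 1) p ⟨t - 1, by omega⟩ q
      (by rw [Fin.le_def]; simp; omega) (by rw [Fin.le_def]; simp; omega) hagree k (Nat.lt_succ_self k)
    have h2 := sandwich w (k + 1) p ⟨t, ht2⟩ q
      (by rw [Fin.le_def]; simp; omega) (by rw [Fin.le_def]; simp; omega) hagree k (Nat.lt_succ_self k)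
    rw [h1, h2]
  · refine le_lcpInf fun k hk => ?_
    exact chain w k ((q : ℕ) - (p : ℕ)) p q rfl (le_of_lt hpq)
      (fun t ht => lt_of_lt_of_le hk (Finset.inf_le ht))

/-- The recursion satisfied by the LCP array. -/
lemma lcp_rec {r : ℕ} (h1 : 0 < r) (h2 : r < n) :
    ibwtLCP w r =
      if w (stdPerm w ⟨r - 1, by omega⟩) = w (stdPerm w ⟨r, h2⟩) then
        1 + lcpInf (ibwtSuffix w (stdPerm w ⟨r - 1, by omega⟩))
            (ibwtSuffix w (stdPerm w ⟨r, h2⟩))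
      else 0 := by
  rw [ibwtLCP, dif_pos ⟨h1, h2⟩]
  by_cases hc : w (stdPerm w ⟨r - 1, by omega⟩) = w (stdPerm w ⟨r, h2⟩)
  · rw [if_pos hc, lcpInf_cons (by rw [ibwtSuffix_zero, ibwtSuffix_zero]; exact hc)]
    have e1 : (fun k => ibwtSuffix w (⟨r - 1, by omega⟩ : Fin n) (k + 1)) =
        ibwtSuffix w (stdPerm w ⟨r - 1, by omega⟩) := by
      funext k; rw [ibwtSuffix_succ]
    have e2 : (fun k => ibwtSuffix w (⟨r, h2⟩ : Fin n) (k + 1)) =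
        ibwtSuffix w (stdPerm w ⟨r, h2⟩) := by
      funext k; rw [ibwtSuffix_succ]
    rw [e1, e2]
  · rw [if_neg hc]
    exact lcpInf_eq_zero (by rw [ibwtSuffix_zero, ibwtSuffix_zero]; exact hc)

end Suffix

lemma eq_top_of_forall_nat_le {x : ℕ∞} (h : ∀ N : ℕ, (N : ℕ∞) ≤ x) : x = ⊤ := by
  by_contra hx
  obtain ⟨m, hm⟩ : ∃ m : ℕ, x = (m : ℕ∞) := ⟨x.toNat, (ENat.coe_toNat hx).symm⟩
  have := h (m + 1)
  rw [hm] at this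
  exact absurd (by exact_mod_cast this) (by omega)

/-- Uniqueness of solutions to the LCP recursion system. -/
lemma unique_system {n : ℕ} (F G : ℕ → ℕ∞) (cond : ℕ → Prop) (lo hi : ℕ → ℕ)
    (hF0 : ∀ r, ¬(0 < r ∧ r < n) → F r = 0)
    (hG0 : ∀ r, ¬(0 < r ∧ r < n) → G r = 0)
    (hFn : ∀ r, 0 < r → r < n → ¬cond r → F r = 0)
    (hGn : ∀ r, 0 < r → r < n → ¬cond r → G r = 0)
    (hFrec : ∀ r, 0 < r → r < n → cond r →
      F r = 1 + (Finset.Ioc (lo r) (hi r)).inf F)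
    (hGrec : ∀ r, 0 < r → r < n → cond r →
      G r = 1 + (Finset.Ioc (lo r) (hi r)).inf G) :
    ∀ r, F r = G r := by
  have key : ∀ N : ℕ, ∀ r, F r = G r ∨ ((N : ℕ∞) ≤ F r ∧ (N : ℕ∞) ≤ G r) := by
    intro N
    induction N with
    | zero => intro r; right; simp
    | succ N ih =>
      intro r
      by_cases hr : 0 < r ∧ r < n
      · by_cases hc : cond r
        · rw [hFrec r hr.1 hr.2 hc, hGrec r hr.1 hr.2 hc]
          set s := Finset.Ioc (lo r) (hi r) with hs
          rcases s.eq_empty_or_nonempty with he | hne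
          · left; rw [he]; simp
          · have hinfF : ∃ t ∈ s, s.inf F = F t := by
              obtain ⟨t, ht, hteq⟩ := Finset.exists_mem_eq_inf' hne F
              exact ⟨t, ht, by rw [← Finset.inf'_eq_inf hne]; exact hteq⟩
            have hinfG : ∃ t ∈ s, s.inf G = G t := by
              obtain ⟨t, ht, hteq⟩ := Finset.exists_mem_eq_inf' hne G
              exact ⟨t, ht, by rw [← Finset.inf'_eq_inf hne]; exact hteq⟩
            obtain ⟨t0, ht0, hF0'⟩ := hinfF
            obtain ⟨t1, ht1, hG0'⟩ := hinfG
            by_cases hFN : s.inf F < (N : ℕ∞)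
            · -- min of F attained, below N, so F = G there
              have hFt0 : F t0 = G t0 := by
                rcases ih t0 with h | h
                · exact h
                · exact absurd (hF0' ▸ h.1) (not_le_of_gt hFN)
              have h1 : s.inf G ≤ s.inf F := by
                rw [hF0', hFt0]; exact Finset.inf_le ht0
              have hGN : s.inf G < (N : ℕ∞) := lt_of_le_of_lt h1 hFN
              have hGt1 : F t1 = G t1 := by
                rcases ih t1 with h | h
                · exact h
                · exact absurd (hG0' ▸ h.2) (not_le_of_gt hGN)
              have h2 : s.inf F ≤ s.inf G := by
                rw [hG0', ← hGt1]; exact Finset.inf_le ht1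
              left; rw [le_antisymm h2 h1]
            · by_cases hGN : s.inf G < (N : ℕ∞)
              · have hGt1 : F t1 = G t1 := by
                  rcases ih t1 with h | h
                  · exact h
                  · exact absurd (hG0' ▸ h.2) (not_le_of_gt hGN)
                have h2 : s.inf F ≤ s.inf G := by
                  rw [hG0', ← hGt1]; exact Finset.inf_le ht1
                exact absurd (lt_of_le_of_lt h2 hGN) hFN
              · right
                push_neg at hFN hGN
                constructor
                · calc ((N + 1 : ℕ) : ℕ∞) = 1 + (N : ℕ∞) := by push_cast; ring
                    _ ≤ 1 + s.inf F := by exact add_le_add le_rfl hFN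
                · calc ((N + 1 : ℕ) : ℕ∞) = 1 + (N : ℕ∞) := by push_cast; ring
                    _ ≤ 1 + s.inf G := by exact add_le_add le_rfl hGN
        · left; rw [hFn r hr.1 hr.2 hc, hGn r hr.1 hr.2 hc]
      · left; rw [hF0 r hr, hG0 r hr]
  intro r
  by_contra hne
  have hboth : ∀ N : ℕ, (N : ℕ∞) ≤ F r ∧ (N : ℕ∞) ≤ G r := by
    intro N
    rcases key N r with h | h
    · exact absurd h hne
    · exact h
  have h1 : F r = ⊤ := eq_top_of_forall_nat_le fun N => (hboth N).1
  have h2 : G r = ⊤ := eq_top_of_forall_nat_le fun N => (hboth N).2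
  exact hne (h1.trans h2.symm)

lemma isPrefix_concat_iff {x : List α} {c : α} {f : ℕ → α} :
    IsPrefix (x ++ [c]) f ↔ IsPrefix x f ∧ f x.length = c := by
  constructor
  · intro h
    refine ⟨fun m => ?_, ?_⟩
    · have hm : (m : ℕ) < (x ++ [c]).length := by
        simp only [List.length_append, List.length_singleton]; omega
      have := h ⟨m.val, hm⟩
      simp only [List.get_eq_getElem] at this ⊢
      rwa [List.getElem_append_left m.isLt] at this
    · have hm : x.length < (x ++ [c]).length := by
        simp only [List.length_append, List.length_singleton]; omega
      have := h ⟨x.length, hm⟩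
      simp only [List.get_eq_getElem] at this
      rwa [List.getElem_concat_length rfl] at this
  · rintro ⟨h1, h2⟩ m
    have hm : (m : ℕ) < x.length + 1 := by
      have := m.isLt
      simpa [List.length_append] using this
    simp only [List.get_eq_getElem]
    rcases Nat.lt_or_ge (m : ℕ) x.length with hlt | hge
    · rw [List.getElem_append_left hlt]
      exact h1 ⟨m.val, hlt⟩
    · have hme : (m : ℕ) = x.length := by omega
      rw [List.getElem_concat_length hme]
      rw [show (m : ℕ) = x.length from hme]
      exact h2

lemma isPrefix_of_agree {z : List α} {f g : ℕ → α} (hf : IsPrefix z f)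
    (h : ∀ i < z.length, g i = f i) : IsPrefix z g := by
  intro m
  rw [h m.val m.isLt]
  exact hf m

section Main

variable {n : ℕ} (v : Fin n → Bool) (x : List Bool) (ixa jxa ixb jxb : ℕ)

/-- order: any xa-rank is below any xb-rank -/
lemma rank_lt_rank {ra rb : Fin n}
    (ha : IsPrefix (x ++ [false]) (ibwtSuffix v ra))
    (hb : IsPrefix (x ++ [true]) (ibwtSuffix v rb)) : ra < rb := by
  rcases lt_or_ge ra rb with h | h
  · exact h
  · exfalso
    have hax : IsPrefix x (ibwtSuffix v ra) := (isPrefix_concat_iff.mp ha).1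
    have hbx : IsPrefix x (ibwtSuffix v rb) := (isPrefix_concat_iff.mp hb).1
    have hagree : ∀ i < x.length, ibwtSuffix v rb i = ibwtSuffix v ra i := by
      intro i hi
      rw [hbx ⟨i, hi⟩, hax ⟨i, hi⟩]
    have := suffix_mono_at v x.length rb ra (by exact_mod_cast h) hagree
    rw [(isPrefix_concat_iff.mp ha).2, (isPrefix_concat_iff.mp hb).2] at this
    exact absurd this (by simp)

/-- The xb-interval starts exactly where the xa-interval ends. -/
lemma jxa_eq_ixb
    (hxa : IsXIntervalIBWT v (x ++ [false]) ixa jxa)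
    (hxb : IsXIntervalIBWT v (x ++ [true]) ixb jxb)
    (hLa : ixa < jxa) (hLb : ixb < jxb) : jxa = ixb := by
  obtain ⟨hxa1, hxa2, hxa3⟩ := hxa
  obtain ⟨hxb1, hxb2, hxb3⟩ := hxb
  have hjan : jxa - 1 < n := by omega
  have hibn : ixb < n := by omega
  have hpa : IsPrefix (x ++ [false]) (ibwtSuffix v ⟨jxa - 1, hjan⟩) :=
    (hxa3 _).mpr (by simp; omega)
  have hpb : IsPrefix (x ++ [true]) (ibwtSuffix v ⟨ixb, hibn⟩) :=
    (hxb3 _).mpr (by simp; omega)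
  have hord : jxa - 1 < ixb := by
    have := rank_lt_rank v x hpa hpb
    simpa [Fin.lt_def] using this
  -- so jxa ≤ ixb; now suppose jxa < ixb and find a contradiction at t = jxa
  rcases Nat.eq_or_lt_of_le (by omega : jxa ≤ ixb) with he | hlt
  · exact he
  · exfalso
    have hjn : jxa < n := by omega
    set t : Fin n := ⟨jxa, hjn⟩ with ht
    have hagree : ∀ i < x.length,
        ibwtSuffix v ⟨jxa - 1, hjan⟩ i = ibwtSuffix v ⟨ixb, hibn⟩ i := by
      intro i hi
      rw [(isPrefix_concat_iff.mp hpa).1 ⟨i, hi⟩, (isPrefix_concat_iff.mp hpb).1 ⟨i, hi⟩]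
    have hsand := sandwich v x.length ⟨jxa - 1, hjan⟩ t ⟨ixb, hibn⟩
      (by rw [ht, Fin.mk_le_mk]; omega) (by rw [ht, Fin.mk_le_mk]; omega) hagree
    have hx : IsPrefix x (ibwtSuffix v t) :=
      isPrefix_of_agree (isPrefix_concat_iff.mp hpa).1 hsand
    rcases Bool.eq_false_or_eq_true (ibwtSuffix v t x.length) with hc | hc
    · have hpt : IsPrefix (x ++ [true]) (ibwtSuffix v t) := isPrefix_concat_iff.mpr ⟨hx, hc⟩
      have := (hxb3 t).mp hpt
      rw [ht] at this
      simp only [Fin.val_mk] at this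
      omega
    · have hpt : IsPrefix (x ++ [false]) (ibwtSuffix v t) := isPrefix_concat_iff.mpr ⟨hx, hc⟩
      have := (hxa3 t).mp hpt
      rw [ht] at this
      simp only [Fin.val_mk] at this
      omega

end Main

section Swap

variable {n : ℕ}

/-- the block-swapping involution, as a function on `Fin n` -/
def tauF (ixa jxa jxb L : ℕ) (hja : jxa = ixa + L) (hjb : jxb = jxa + L) (hn : jxb ≤ n)
    (r : Fin n) : Fin n :=
  ⟨if ixa ≤ r.val ∧ r.val < jxa then r.val + L
    else if jxa ≤ r.val ∧ r.val < jxb then r.val - L else r.val, by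
      have := r.isLt
      split_ifs <;> omega⟩

variable (ixa jxa jxb L : ℕ) (hja : jxa = ixa + L) (hjb : jxb = jxa + L) (hn : jxb ≤ n)

lemma tauF_val (r : Fin n) :
    (tauF ixa jxa jxb L hja hjb hn r).val =
      if ixa ≤ r.val ∧ r.val < jxa then r.val + L
      else if jxa ≤ r.val ∧ r.val < jxb then r.val - L else r.val := rfl

lemma tauF_involutive : Function.Involutive (tauF ixa jxa jxb L hja hjb hn) := by
  intro r
  apply Fin.ext
  rw [tauF_val, tauF_val]
  split_ifs <;> omega

/-- the block-swapping involution as a permutation -/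
def tauP : Equiv.Perm (Fin n) :=
  (tauF_involutive ixa jxa jxb L hja hjb hn).toPerm

lemma tauP_val (r : Fin n) :
    ((tauP ixa jxa jxb L hja hjb hn r) : ℕ) =
      if ixa ≤ r.val ∧ r.val < jxa then r.val + L
      else if jxa ≤ r.val ∧ r.val < jxb then r.val - L else r.val := rfl

end Swap

section Main2

variable {n : ℕ} (v : Fin n → Bool) (x : List Bool) (ixa jxa jxb L : ℕ)
  (hL : 0 < L) (hja : jxa = ixa + L) (hjb : jxb = jxa + L) (hn : jxb ≤ n)
  (pa : ∀ r : Fin n, IsPrefix (x ++ [false]) (ibwtSuffix v r) ↔ (ixa ≤ r.val ∧ r.val < jxa))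
  (pb : ∀ r : Fin n, IsPrefix (x ++ [true]) (ibwtSuffix v r) ↔ (jxa ≤ r.val ∧ r.val < jxb))

include hL hja hjb hn pa pb

/-- agreement below x.length+1 for two ranks in the xa-interval -/
lemma lcp_ge_interior_a {t : ℕ} (h1 : ixa < t) (h2 : t < jxa) :
    ((x.length + 1 : ℕ) : ℕ∞) ≤ ibwtLCP v t := by
  have htn : t < n := by omega
  rw [ibwtLCP, dif_pos ⟨by omega, htn⟩]
  refine le_lcpInf fun k hk => ?_
  have hk' : k < x.length + 1 := by exact_mod_cast hk
  have hk'' : k < (x ++ [false]).length := by simp; omega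
  have ha1 : IsPrefix (x ++ [false]) (ibwtSuffix v ⟨t - 1, by omega⟩) :=
    (pa _).mpr (by simp; omega)
  have ha2 : IsPrefix (x ++ [false]) (ibwtSuffix v ⟨t, htn⟩) :=
    (pa _).mpr (by simp; omega)
  rw [ha1 ⟨k, hk''⟩, ha2 ⟨k, hk''⟩]

lemma lcp_ge_interior_b {t : ℕ} (h1 : jxa < t) (h2 : t < jxb) :
    ((x.length + 1 : ℕ) : ℕ∞) ≤ ibwtLCP v t := by
  have htn : t < n := by omega
  rw [ibwtLCP, dif_pos ⟨by omega, htn⟩]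
  refine le_lcpInf fun k hk => ?_
  have hk' : k < x.length + 1 := by exact_mod_cast hk
  have hk'' : k < (x ++ [true]).length := by simp; omega
  have ha1 : IsPrefix (x ++ [true]) (ibwtSuffix v ⟨t - 1, by omega⟩) :=
    (pb _).mpr (by simp; omega)
  have ha2 : IsPrefix (x ++ [true]) (ibwtSuffix v ⟨t, htn⟩) :=
    (pb _).mpr (by simp; omega)
  rw [ha1 ⟨k, hk''⟩, ha2 ⟨k, hk''⟩]

lemma lcp_at_jxa : ibwtLCP v jxa = (x.length : ℕ∞) := by
  have hjn : jxa < n := by omega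
  rw [ibwtLCP, dif_pos ⟨by omega, hjn⟩]
  have ha : IsPrefix (x ++ [false]) (ibwtSuffix v ⟨jxa - 1, by omega⟩) :=
    (pa _).mpr (by simp; omega)
  have hb : IsPrefix (x ++ [true]) (ibwtSuffix v ⟨jxa, hjn⟩) :=
    (pb _).mpr (by simp; omega)
  refine le_antisymm ?_ ?_
  · refine lcpInf_le ?_
    rw [(isPrefix_concat_iff.mp ha).2, (isPrefix_concat_iff.mp hb).2]
    simp
  · refine le_lcpInf fun k hk => ?_
    have hk' : k < x.length := by exact_mod_cast hk
    rw [(isPrefix_concat_iff.mp ha).1 ⟨k, hk'⟩, (isPrefix_concat_iff.mp hb).1 ⟨k, hk'⟩]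

lemma lcp_left_bound (p q : Fin n) (hp : p.val < ixa) (hq : q.val = ixa) :
    lcpInf (ibwtSuffix v p) (ibwtSuffix v q) ≤ (x.length : ℕ∞) := by
  by_contra h
  push_neg at h
  have hqpre : IsPrefix (x ++ [false]) (ibwtSuffix v q) := (pa _).mpr (by omega)
  have hppre : IsPrefix (x ++ [false]) (ibwtSuffix v p) := by
    refine isPrefix_of_agree hqpre fun i hi => ?_
    have hi' : (i : ℕ∞) < lcpInf (ibwtSuffix v p) (ibwtSuffix v q) := by
      refine lt_of_le_of_lt ?_ h
      exact_mod_cast by simp at hi; omega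
    exact (apply_eq_of_lt_lcpInf hi')
  have := (pa p).mp hppre
  omega

lemma lcp_right_bound (p q : Fin n) (hp : p.val = jxb - 1) (hq : jxb ≤ q.val) :
    lcpInf (ibwtSuffix v p) (ibwtSuffix v q) ≤ (x.length : ℕ∞) := by
  by_contra h
  push_neg at h
  have hppre : IsPrefix (x ++ [true]) (ibwtSuffix v p) := (pb _).mpr (by omega)
  have hqpre : IsPrefix (x ++ [true]) (ibwtSuffix v q) := by
    refine isPrefix_of_agree hppre fun i hi => ?_
    have hi' : (i : ℕ∞) < lcpInf (ibwtSuffix v p) (ibwtSuffix v q) := by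
      refine lt_of_le_of_lt ?_ h
      exact_mod_cast by simp at hi; omega
    exact (apply_eq_of_lt_lcpInf hi').symm
  have := (pb q).mp hqpre
  omega

lemma min1 (p q : Fin n) (hp : p.val < ixa) (hq : q.val = ixa) :
    (Finset.Ioc p.val jxa).inf (ibwtLCP v) = (Finset.Ioc p.val ixa).inf (ibwtLCP v) := by
  rw [← Finset.Ioc_union_Ioc_eq_Ioc (le_of_lt hp) (by omega : ixa ≤ jxa), Finset.inf_union]
  refine inf_eq_left.mpr ?_
  refine Finset.le_inf fun t ht => ?_
  simp only [Finset.mem_Ioc] at ht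
  have hle : (Finset.Ioc p.val ixa).inf (ibwtLCP v) ≤ (x.length : ℕ∞) := by
    have hpq : p < q := by rw [Fin.lt_def]; omega
    have := range_min v hpq
    rw [hq] at this
    rw [← this]
    exact lcp_left_bound v x ixa jxa jxb L hL hja hjb hn pa pb p q hp hq
  refine le_trans hle ?_
  rcases Nat.eq_or_lt_of_le ht.2 with he | hlt
  · rw [he, lcp_at_jxa v x ixa jxa jxb L hL hja hjb hn pa pb]
  · refine le_trans ?_ (lcp_ge_interior_a v x ixa jxa jxb L hL hja hjb hn pa pb ht.1 hlt)
    exact_mod_cast by omega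

lemma min2 (p q : Fin n) (hp : p.val = jxb - 1) (hq : jxb ≤ q.val) :
    (Finset.Ioc (jxa - 1) q.val).inf (ibwtLCP v) =
      (Finset.Ioc (jxb - 1) q.val).inf (ibwtLCP v) := by
  rw [← Finset.Ioc_union_Ioc_eq_Ioc (by omega : jxa - 1 ≤ jxb - 1) (by omega : jxb - 1 ≤ q.val),
    Finset.inf_union]
  refine inf_eq_right.mpr ?_
  refine Finset.le_inf fun t ht => ?_
  simp only [Finset.mem_Ioc] at ht
  have hle : (Finset.Ioc (jxb - 1) q.val).inf (ibwtLCP v) ≤ (x.length : ℕ∞) := by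
    have hpq : p < q := by rw [Fin.lt_def]; omega
    have := range_min v hpq
    rw [hp] at this
    rw [← this]
    exact lcp_right_bound v x ixa jxa jxb L hL hja hjb hn pa pb p q hp hq
  refine le_trans hle ?_
  have ht1 : jxa ≤ t := by omega
  rcases Nat.eq_or_lt_of_le ht1 with he | hlt
  · rw [← he, lcp_at_jxa v x ixa jxa jxb L hL hja hjb hn pa pb]
  · refine le_trans ?_ (lcp_ge_interior_b v x ixa jxa jxb L hL hja hjb hn pa pb hlt (by omega))
    exact_mod_cast by omega

end Main2

section Main3

variable {n : ℕ} (v v' : Fin n → Bool) (x : List Bool) (ixa jxa jxb L : ℕ)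
  (hL : 0 < L) (hja : jxa = ixa + L) (hjb : jxb = jxa + L) (hn : jxb ≤ n)
  (pa : ∀ r : Fin n, IsPrefix (x ++ [false]) (ibwtSuffix v r) ↔ (ixa ≤ r.val ∧ r.val < jxa))
  (pb : ∀ r : Fin n, IsPrefix (x ++ [true]) (ibwtSuffix v r) ↔ (jxa ≤ r.val ∧ r.val < jxb))
  (hva' : ∀ r : Fin n, ixa ≤ r.val → r.val < jxa → v r = false)
  (hvb' : ∀ r : Fin n, jxa ≤ r.val → r.val < jxb → v r = true)
  (hv'' : ∀ r : Fin n, v' r = if ixa ≤ r.val ∧ r.val < jxa then true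
      else if jxa ≤ r.val ∧ r.val < jxb then false else v r)
  (hlcp' : ∀ t : ℕ, 0 < t → t < L → ibwtLCP v (ixa + t) = ibwtLCP v (jxa + t))

section C1

include hja hjb hn hva' hvb' hv''

lemma vp_tau (p : Fin n) : v' (tauP ixa jxa jxb L hja hjb hn p) = v p := by
  rw [hv'' _]
  by_cases h1 : ixa ≤ p.val ∧ p.val < jxa
  · have hval : (tauP ixa jxa jxb L hja hjb hn p).val = p.val + L := by
      rw [tauP_val, if_pos h1]
    rw [hval, if_neg (by omega), if_pos (by omega)]
    exact (hva' p h1.1 h1.2).symm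
  · by_cases h2 : jxa ≤ p.val ∧ p.val < jxb
    · have hval : (tauP ixa jxa jxb L hja hjb hn p).val = p.val - L := by
        rw [tauP_val, if_neg h1, if_pos h2]
      rw [hval, if_pos (by omega)]
      exact (hvb' p h2.1 h2.2).symm
    · have hval : (tauP ixa jxa jxb L hja hjb hn p).val = p.val := by
        rw [tauP_val, if_neg h1, if_neg h2]
      have hpp : tauP ixa jxa jxb L hja hjb hn p = p := Fin.ext hval
      rw [hpp, if_neg h1, if_neg h2]

end C1

section C2

include hja hjb hn hva' hvb'

lemma tau_strict (p q : Fin n) (hpq : p < q) (hc : v p = v q) :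
    tauP ixa jxa jxb L hja hjb hn p < tauP ixa jxa jxb L hja hjb hn q := by
  rw [Fin.lt_def] at hpq ⊢
  rw [tauP_val, tauP_val]
  cases hvp : v p with
  | false =>
    have hvq : v q = false := by rw [← hc, hvp]
    have hpB : ¬(jxa ≤ p.val ∧ p.val < jxb) := fun h => by
      rw [hvb' p h.1 h.2] at hvp; exact Bool.noConfusion hvp
    have hqB : ¬(jxa ≤ q.val ∧ q.val < jxb) := fun h => by
      rw [hvb' q h.1 h.2] at hvq; exact Bool.noConfusion hvq
    split_ifs <;> omega
  | true =>
    have hvq : v q = true := by rw [← hc, hvp]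
    have hpA : ¬(ixa ≤ p.val ∧ p.val < jxa) := fun h => by
      rw [hva' p h.1 h.2] at hvp; exact Bool.noConfusion hvp
    have hqA : ¬(ixa ≤ q.val ∧ q.val < jxa) := fun h => by
      rw [hva' q h.1 h.2] at hvq; exact Bool.noConfusion hvq
    split_ifs <;> omega

end C2

section C3

include hja hjb hn hva' hvb' hv''

lemma stdPerm_v' : stdPerm v' = (stdPerm v).trans (tauP ixa jxa jxb L hja hjb hn) := by
  have hcomp : ∀ r : Fin n, v' ((stdPerm v).trans (tauP ixa jxa jxb L hja hjb hn) r)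
      = v (stdPerm v r) := fun r =>
    vp_tau v v' ixa jxa jxb L hja hjb hn hva' hvb' hv'' (stdPerm v r)
  refine ((Tuple.eq_sort_iff.mpr ⟨?_, ?_⟩).symm : Tuple.sort v' = _)
  · intro a b hab
    show v' _ ≤ v' _
    rw [hcomp, hcomp]
    exact hat_monotone v hab
  · intro i j hij heq
    rw [hcomp, hcomp] at heq
    have h1 : stdPerm v i < stdPerm v j := stdPerm_strict v hij heq
    exact tau_strict v ixa jxa jxb L hja hjb hn hva' hvb' (stdPerm v i) (stdPerm v j) h1 heq

lemma hat_v' (r : Fin n) : v' (stdPerm v' r) = v (stdPerm v r) := by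
  rw [stdPerm_v' v v' ixa jxa jxb L hja hjb hn hva' hvb' hv'']
  exact vp_tau v v' ixa jxa jxb L hja hjb hn hva' hvb' hv'' (stdPerm v r)

end C3

section Step3

include hL hja hjb hn pa pb hva' hvb' hlcp'

omit hL hja hjb hn pa pb hva' hvb' hlcp' in
lemma Ioc_succ_singleton' (a : ℕ) : Finset.Ioc a (a + 1) = {a + 1} := by
  ext t
  simp only [Finset.mem_Ioc, Finset.mem_singleton]
  omega

lemma step3 (p q : Fin n) (hpq : p < q) (hc : v p = v q)
    (hmid : ∀ z : Fin n, p.val < z.val → z.val < q.val → v z ≠ v p) :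
    (Finset.Ioc ((tauP ixa jxa jxb L hja hjb hn p) : ℕ)
        ((tauP ixa jxa jxb L hja hjb hn q) : ℕ)).inf (ibwtLCP v)
      = (Finset.Ioc (p : ℕ) (q : ℕ)).inf (ibwtLCP v) := by
  have hpq' : p.val < q.val := hpq
  have hqn : q.val < n := q.isLt
  cases hvp : v p with
  | false =>
    have hvq : v q = false := by rw [← hc, hvp]
    have hpB : ¬(jxa ≤ p.val ∧ p.val < jxb) := fun h => by
      rw [hvb' p h.1 h.2] at hvp; exact Bool.noConfusion hvp
    have hqB : ¬(jxa ≤ q.val ∧ q.val < jxb) := fun h => by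
      rw [hvb' q h.1 h.2] at hvq; exact Bool.noConfusion hvq
    by_cases hpA : ixa ≤ p.val ∧ p.val < jxa
    · have hτp : (tauP ixa jxa jxb L hja hjb hn p).val = p.val + L := by
        rw [tauP_val, if_pos hpA]
      by_cases hqA : ixa ≤ q.val ∧ q.val < jxa
      · -- both inside the xa block: adjacent, use hlcp'
        have hτq : (tauP ixa jxa jxb L hja hjb hn q).val = q.val + L := by
          rw [tauP_val, if_pos hqA]
        have hq1 : q.val = p.val + 1 := by
          by_contra hne
          have hz : p.val + 1 < q.val := by omega
          have hzn : p.val + 1 < n := by omega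
          refine hmid ⟨p.val + 1, hzn⟩ (by simp) (by simpa using hz) ?_
          rw [hvp]
          exact hva' ⟨p.val + 1, hzn⟩ (by simp; omega) (by simp; omega)
        rw [hτp, hτq, hq1, show p.val + 1 + L = (p.val + L) + 1 by omega,
          Ioc_succ_singleton', Ioc_succ_singleton',
          Finset.inf_singleton, Finset.inf_singleton]
        have := hlcp' (p.val + 1 - ixa) (by omega) (by omega)
        rw [show ixa + (p.val + 1 - ixa) = p.val + 1 by omega,
          show jxa + (p.val + 1 - ixa) = p.val + L + 1 by omega] at this
        exact this.symm
      · -- p at the right end of the xa block, q ≥ jxb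
        have hq1 : jxb ≤ q.val := by omega
        have hp1 : p.val = jxa - 1 := by
          by_contra hne
          have hz : p.val + 1 < jxa := by omega
          have hzn : p.val + 1 < n := by omega
          refine hmid ⟨p.val + 1, hzn⟩ (by simp) (by simp; omega) ?_
          rw [hvp]
          exact hva' ⟨p.val + 1, hzn⟩ (by simp; omega) (by simp; omega)
        have hτq : (tauP ixa jxa jxb L hja hjb hn q).val = q.val := by
          rw [tauP_val, if_neg (by omega), if_neg (by omega)]
        rw [hτp, hτq, show p.val + L = jxb - 1 by omega, show (p : ℕ) = jxa - 1 by omega]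
        exact (min2 v x ixa jxa jxb L hL hja hjb hn pa pb
          (tauP ixa jxa jxb L hja hjb hn p) q (by rw [hτp]; omega) hq1).symm
    · by_cases hqA : ixa ≤ q.val ∧ q.val < jxa
      · -- p < ixa, q = ixa
        have hp1 : p.val < ixa := by omega
        have hq1 : q.val = ixa := by
          by_contra hne
          have hz : ixa < q.val := by omega
          have hzn : ixa < n := by omega
          refine hmid ⟨ixa, hzn⟩ (by simp; omega) (by simpa using hz) ?_
          rw [hvp]
          exact hva' ⟨ixa, hzn⟩ (by simp) (by simp; omega)
        have hτp : (tauP ixa jxa jxb L hja hjb hn p).val = p.val := by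
          rw [tauP_val, if_neg (by omega), if_neg (by omega)]
        have hτq : (tauP ixa jxa jxb L hja hjb hn q).val = jxa := by
          rw [tauP_val, if_pos (by omega)]; omega
        rw [hτp, hτq, hq1]
        exact min1 v x ixa jxa jxb L hL hja hjb hn pa pb p q hp1 hq1
      · -- both fixed by τ
        have hτp : (tauP ixa jxa jxb L hja hjb hn p).val = p.val := by
          rw [tauP_val, if_neg hpA, if_neg hpB]
        have hτq : (tauP ixa jxa jxb L hja hjb hn q).val = q.val := by
          rw [tauP_val, if_neg hqA, if_neg hqB]
        rw [hτp, hτq]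
  | true =>
    have hvq : v q = true := by rw [← hc, hvp]
    have hpA : ¬(ixa ≤ p.val ∧ p.val < jxa) := fun h => by
      rw [hva' p h.1 h.2] at hvp; exact Bool.noConfusion hvp
    have hqA : ¬(ixa ≤ q.val ∧ q.val < jxa) := fun h => by
      rw [hva' q h.1 h.2] at hvq; exact Bool.noConfusion hvq
    by_cases hpB : jxa ≤ p.val ∧ p.val < jxb
    · have hτp : (tauP ixa jxa jxb L hja hjb hn p).val = p.val - L := by
        rw [tauP_val, if_neg hpA, if_pos hpB]
      by_cases hqB : jxa ≤ q.val ∧ q.val < jxb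
      · -- both inside the xb block: adjacent, use hlcp'
        have hτq : (tauP ixa jxa jxb L hja hjb hn q).val = q.val - L := by
          rw [tauP_val, if_neg hqA, if_pos hqB]
        have hq1 : q.val = p.val + 1 := by
          by_contra hne
          have hz : p.val + 1 < q.val := by omega
          have hzn : p.val + 1 < n := by omega
          refine hmid ⟨p.val + 1, hzn⟩ (by simp) (by simpa using hz) ?_
          rw [hvp]
          exact hvb' ⟨p.val + 1, hzn⟩ (by simp; omega) (by simp; omega)
        rw [hτp, hτq, hq1, show p.val + 1 - L = (p.val - L) + 1 by omega,
          Ioc_succ_singleton', Ioc_succ_singleton',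
          Finset.inf_singleton, Finset.inf_singleton]
        have := hlcp' (p.val + 1 - jxa) (by omega) (by omega)
        rw [show ixa + (p.val + 1 - jxa) = p.val - L + 1 by omega,
          show jxa + (p.val + 1 - jxa) = p.val + 1 by omega] at this
        exact this
      · -- p at right end of xb block, q ≥ jxb
        have hq1 : jxb ≤ q.val := by omega
        have hp1 : p.val = jxb - 1 := by
          by_contra hne
          have hz : p.val + 1 < jxb := by omega
          have hzn : p.val + 1 < n := by omega
          refine hmid ⟨p.val + 1, hzn⟩ (by simp) (by simp; omega) ?_
          rw [hvp]
          exact hvb' ⟨p.val + 1, hzn⟩ (by simp; omega) (by simp; omega)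
        have hτq : (tauP ixa jxa jxb L hja hjb hn q).val = q.val := by
          rw [tauP_val, if_neg (by omega), if_neg (by omega)]
        rw [hτp, hτq, show p.val - L = jxa - 1 by omega, show (p : ℕ) = jxb - 1 by omega]
        exact min2 v x ixa jxa jxb L hL hja hjb hn pa pb p q (by omega) hq1
    · by_cases hqB : jxa ≤ q.val ∧ q.val < jxb
      · -- p < ixa, q = jxa
        have hp1 : p.val < ixa := by omega
        have hq1 : q.val = jxa := by
          by_contra hne
          have hz : jxa < q.val := by omega
          have hzn : jxa < n := by omega
          refine hmid ⟨jxa, hzn⟩ (by simp; omega) (by simpa using hz) ?_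
          rw [hvp]
          exact hvb' ⟨jxa, hzn⟩ (by simp) (by simp; omega)
        have hτp : (tauP ixa jxa jxb L hja hjb hn p).val = p.val := by
          rw [tauP_val, if_neg (by omega), if_neg (by omega)]
        have hτq : (tauP ixa jxa jxb L hja hjb hn q).val = ixa := by
          rw [tauP_val, if_neg (by omega), if_pos (by omega)]; omega
        rw [hτp, hτq, hq1]
        exact (min1 v x ixa jxa jxb L hL hja hjb hn pa pb p
          (tauP ixa jxa jxb L hja hjb hn q) hp1 (by rw [hτq])).symm
      · have hτp : (tauP ixa jxa jxb L hja hjb hn p).val = p.val := by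
          rw [tauP_val, if_neg hpA, if_neg hpB]
        have hτq : (tauP ixa jxa jxb L hja hjb hn q).val = q.val := by
          rw [tauP_val, if_neg hqA, if_neg hqB]
        rw [hτp, hτq]

end Step3

end Main3

/-- **Swap lemma.** Let `v ∈ {a,b}ⁿ` (`a = false < b = true`) and
`LCP = LCP_{IBWT(v)}`. If `x` occurs in `IBWT(v)`, the LCP arrays on the
xa-interval and the xb-interval agree, `v` is all a's on the xa-interval and all
b's on the xb-interval, then the string `v'` obtained by swapping these two blocks
satisfies `LCP_{IBWT(v')} = LCP_{IBWT(v)}`. -/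
theorem swap_lemma {n : ℕ} (v v' : Fin n → Bool) (x : List Bool)
    (ixa jxa ixb jxb : ℕ)
    (hocc : ∃ r : Fin n, IsPrefix x (ibwtSuffix v r))
    (hxa : IsXIntervalIBWT v (x ++ [false]) ixa jxa)
    (hxb : IsXIntervalIBWT v (x ++ [true]) ixb jxb)
    (hlen : jxa - ixa = jxb - ixb)
    (hlcp : ∀ t : ℕ, 0 < t → t < jxa - ixa →
      ibwtLCP v (ixa + t) = ibwtLCP v (ixb + t))
    (hva : ∀ r : Fin n, ixa ≤ r.val → r.val < jxa → v r = false)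
    (hvb : ∀ r : Fin n, ixb ≤ r.val → r.val < jxb → v r = true)
    (hv' : ∀ r : Fin n, v' r =
      if ixa ≤ r.val ∧ r.val < jxa then true
      else if ixb ≤ r.val ∧ r.val < jxb then false
      else v r) :
    ∀ r : ℕ, ibwtLCP v' r = ibwtLCP v r := by
  obtain ⟨hxa1, hxa2, hxa3⟩ := hxa
  obtain ⟨hxb1, hxb2, hxb3⟩ := hxb
  rcases Nat.eq_zero_or_pos (jxa - ixa) with hL0 | hL
  · -- degenerate case: empty intervals, v' = v
    have hvv : v' = v := by
      funext r
      rw [hv' r, if_neg (by omega), if_neg (by omega)]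
    rw [hvv]
    intro r; rfl
  · set L := jxa - ixa with hdefL
    have hja : jxa = ixa + L := by omega
    have hib : jxa = ixb :=
      jxa_eq_ixb v x ixa jxa ixb jxb ⟨hxa1, hxa2, hxa3⟩ ⟨hxb1, hxb2, hxb3⟩
        (by omega) (by omega)
    have hjb : jxb = jxa + L := by omega
    have hn' : jxb ≤ n := hxb2
    have pb' : ∀ r : Fin n, IsPrefix (x ++ [true]) (ibwtSuffix v r) ↔
        (jxa ≤ r.val ∧ r.val < jxb) := by
      intro r
      rw [hib]
      exact hxb3 r
    have hvb2 : ∀ r : Fin n, jxa ≤ r.val → r.val < jxb → v r = true :=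
      fun r h1 h2 => hvb r (by omega) h2
    have hv2 : ∀ r : Fin n, v' r = if ixa ≤ r.val ∧ r.val < jxa then true
        else if jxa ≤ r.val ∧ r.val < jxb then false else v r := by
      intro r
      rw [hv' r, ← hib]
    have hlcp2 : ∀ t : ℕ, 0 < t → t < L → ibwtLCP v (ixa + t) = ibwtLCP v (jxa + t) := by
      intro t h1 h2
      have := hlcp t h1 (by omega)
      rwa [← hib] at this
    have hC2 := stdPerm_v' v v' ixa jxa jxb L hja hjb hn' hva hvb2 hv2
    have hhat := hat_v' v v' ixa jxa jxb L hja hjb hn' hva hvb2 hv2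
    refine unique_system (n := n) (ibwtLCP v') (ibwtLCP v)
      (fun r => ∃ h2 : r < n,
        v (stdPerm v ⟨r - 1, Nat.lt_of_le_of_lt (Nat.sub_le r 1) h2⟩) = v (stdPerm v ⟨r, h2⟩))
      (fun r => if h2 : r < n then
        ((tauP ixa jxa jxb L hja hjb hn'
          (stdPerm v ⟨r - 1, Nat.lt_of_le_of_lt (Nat.sub_le r 1) h2⟩)) : ℕ) else 0)
      (fun r => if h2 : r < n then
        ((tauP ixa jxa jxb L hja hjb hn' (stdPerm v ⟨r, h2⟩)) : ℕ) else 0)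
      ?_ ?_ ?_ ?_ ?_ ?_
    · intro r hr
      rw [ibwtLCP, dif_neg hr]
    · intro r hr
      rw [ibwtLCP, dif_neg hr]
    · intro r h1 h2 hc
      rw [lcp_rec v' h1 h2, if_neg ?_]
      rw [hhat, hhat]
      intro he
      exact hc ⟨h2, he⟩
    · intro r h1 h2 hc
      rw [lcp_rec v h1 h2, if_neg ?_]
      intro he
      exact hc ⟨h2, he⟩
    · -- recursion for v'
      intro r h1 h2 hc
      obtain ⟨h2', hcc⟩ := hc
      have hcc' : v' (stdPerm v' ⟨r - 1, by omega⟩) = v' (stdPerm v' ⟨r, h2⟩) := by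
        rw [hhat, hhat]; exact hcc
      rw [lcp_rec v' h1 h2, if_pos hcc']
      congr 1
      have hlt : stdPerm v' ⟨r - 1, by omega⟩ < stdPerm v' ⟨r, h2⟩ :=
        stdPerm_strict v' (Fin.mk_lt_mk.mpr (by omega)) hcc'
      rw [range_min v' hlt]
      have e1 : ((stdPerm v' (⟨r - 1, by omega⟩ : Fin n)) : ℕ) =
          ((tauP ixa jxa jxb L hja hjb hn'
            (stdPerm v ⟨r - 1, Nat.lt_of_le_of_lt (Nat.sub_le r 1) h2⟩)) : ℕ) := by
        rw [hC2]; rfl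
      have e2 : ((stdPerm v' (⟨r, h2⟩ : Fin n)) : ℕ) =
          ((tauP ixa jxa jxb L hja hjb hn' (stdPerm v ⟨r, h2⟩)) : ℕ) := by
        rw [hC2]; rfl
      rw [e1, e2]; simp only [dif_pos h2]
    · -- recursion for v
      intro r h1 h2 hc
      obtain ⟨h2', hcc⟩ := hc
      have hcc' : v (stdPerm v ⟨r - 1, by omega⟩) = v (stdPerm v ⟨r, h2⟩) := hcc
      rw [lcp_rec v h1 h2, if_pos hcc']
      congr 1
      have hlt : stdPerm v ⟨r - 1, by omega⟩ < stdPerm v ⟨r, h2⟩ :=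
        stdPerm_strict v (Fin.mk_lt_mk.mpr (by omega)) hcc'
      rw [range_min v hlt]
      have hmid : ∀ z : Fin n, ((stdPerm v ⟨r - 1, by omega⟩ : Fin n) : ℕ) < z.val →
          z.val < ((stdPerm v ⟨r, h2⟩ : Fin n) : ℕ) →
          v z ≠ v (stdPerm v ⟨r - 1, by omega⟩) := by
        intro z hz1 hz2 he
        set r' : Fin n := (stdPerm v).symm z with hr'
        have hz : stdPerm v r' = z := Equiv.apply_symm_apply _ _
        have hc1 : v (stdPerm v ⟨r - 1, by omega⟩) = v (stdPerm v r') := by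
          rw [hz]; exact he.symm
        have h1' : (⟨r - 1, by omega⟩ : Fin n) < r' :=
          (stdPerm_lt_iff v hc1).mp (by rw [Fin.lt_def, hz]; exact hz1)
        have hc2 : v (stdPerm v r') = v (stdPerm v ⟨r, h2⟩) := by
          rw [hz, he, hcc']
        have h2'' : r' < (⟨r, h2⟩ : Fin n) :=
          (stdPerm_lt_iff v hc2).mp (by rw [Fin.lt_def, hz]; exact hz2)
        rw [Fin.lt_def] at h1' h2''
        simp only [Fin.val_mk] at h1' h2''
        omega
      rw [← step3 v x ixa jxa jxb L hL hja hjb hn' hxa3 pb' hva hvb2 hlcp2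
        (stdPerm v ⟨r - 1, by omega⟩) (stdPerm v ⟨r, h2⟩) hlt hcc' hmid]
      simp only [dif_pos h2]



end SILA
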